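/- arXiv:2502.10162 — 2 statements merged into one kernel-verified Lean document; each statement's English description precedes it below -/
import Mathlib

section
/- Let N be a finite set of n input variables, let v : 2^N → ℝ be a reward function, and let γ : 2^N → ℝ be an arbitrary family of parameters. Define u^AND(T) = 0.5·v(T) + γ(T) and u^OR(T) = 0.5·v(T) − γ(T) for every T ⊆ N, and set I^AND_S = Σ_{T ⊆ S} (−1)^{|S|−|T|} u^AND(T) and I^OR_S = −Σ_{T ⊆ S} (−1)^{|S|−|T|} u^OR(N\T) for every S ⊆ N. Then for every T ⊆ N one has the universal matching property v(T) = v(∅) + Σ_{S ⊆ T, S ≠ ∅} I^AND_S + Σ_{S ⊆ N, S ∩ T ≠ ∅} I^OR_S. -/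
open Finset

lemma sign_sum_real {ι : Type*} [DecidableEq ι] (x : Finset ι) :
    (∑ m ∈ x.powerset, (-1 : ℝ) ^ m.card) = if x = ∅ then 1 else 0 := by
  have := @Finset.sum_powerset_neg_one_pow_card ι _ x
  have h : ((∑ m ∈ x.powerset, (-1 : ℤ) ^ m.card : ℤ) : ℝ)
      = ∑ m ∈ x.powerset, (-1 : ℝ) ^ m.card := by push_cast; ring_nf
  rw [← h, this]
  split <;> norm_num

lemma inner_sign {ι : Type*} [DecidableEq ι] (A T : Finset ι) (hT : T ⊆ A) :
    (∑ S ∈ A.powerset.filter (fun S => T ⊆ S), (-1 : ℝ) ^ (S.card - T.card))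
      = if T = A then 1 else 0 := by
  have key : (∑ S ∈ A.powerset.filter (fun S => T ⊆ S), (-1 : ℝ) ^ (S.card - T.card))
      = ∑ m ∈ (A \ T).powerset, (-1 : ℝ) ^ m.card := by
    refine Finset.sum_nbij' (fun S => S \ T) (fun m => m ∪ T) ?_ ?_ ?_ ?_ ?_
    · intro S hS
      simp only [mem_filter, mem_powerset] at hS
      exact mem_powerset.2 (sdiff_subset_sdiff hS.1 (by rfl))
    · intro m hm
      simp only [mem_powerset] at hm
      simp only [mem_filter, mem_powerset]
      constructor
      · exact union_subset (hm.trans (sdiff_subset)) hT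
      · exact subset_union_right
    · intro S hS
      simp only [mem_filter, mem_powerset] at hS
      exact sdiff_union_of_subset hS.2
    · intro m hm
      simp only [mem_powerset] at hm
      have hd : Disjoint m T := by
        refine Finset.disjoint_left.2 fun a ha hat => ?_
        exact (Finset.mem_sdiff.1 (hm ha)).2 hat
      show (m ∪ T) \ T = m
      rw [Finset.union_sdiff_right, Finset.sdiff_eq_self_of_disjoint hd]
    · intro S hS
      simp only [mem_filter, mem_powerset] at hS
      rw [card_sdiff_of_subset hS.2]
  rw [key, sign_sum_real]
  congr 1
  simp only [sdiff_eq_empty_iff_subset, eq_iff_iff]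
  exact ⟨fun h => subset_antisymm hT h, fun h => h ▸ subset_rfl⟩

lemma mobius_sum {ι : Type*} [DecidableEq ι] (u : Finset ι → ℝ) (A : Finset ι) :
    ∑ S ∈ A.powerset, ∑ T ∈ S.powerset, (-1 : ℝ) ^ (S.card - T.card) * u T = u A := by
  rw [Finset.sum_comm' (s' := fun T => A.powerset.filter (fun S => T ⊆ S))
      (t' := A.powerset) (by
        intro S T
        simp only [mem_powerset, mem_filter]
        constructor
        · intro h
          exact ⟨⟨h.1, h.2⟩, h.2.trans h.1⟩
        · intro h
          exact ⟨h.1.1, h.1.2⟩)]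
  have : ∀ T ∈ A.powerset,
      (∑ S ∈ A.powerset.filter (fun S => T ⊆ S), (-1 : ℝ) ^ (S.card - T.card) * u T)
        = (if T = A then 1 else 0) * u T := by
    intro T hT
    rw [← Finset.sum_mul, inner_sign A T (mem_powerset.1 hT)]
  rw [Finset.sum_congr rfl this]
  simp

/-- **Theorem 1 (universal matching property).**
Let `N` be a finite set of input variables (modeled as `Finset.univ` over a fintype `ι`),
`v` a reward function on subsets, and `γ` an arbitrary family of parameters.
Define `uAND T = 0.5 • v T + γ T`, `uOR T = 0.5 • v T - γ T`,
`IAND S = ∑_{T ⊆ S} (-1)^{|S|-|T|} uAND T`, and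
`IOR S = -∑_{T ⊆ S} (-1)^{|S|-|T|} uOR (N \ T)`.
Then for every `T ⊆ N`,
`v T = v ∅ + ∑_{∅ ≠ S ⊆ T} IAND S + ∑_{S ⊆ N, S ∩ T ≠ ∅} IOR S`. -/
theorem universal_matching_AND_OR {ι : Type*} [Fintype ι] [DecidableEq ι]
    (v γ uAND uOR IAND IOR : Finset ι → ℝ)
    (huAND : ∀ T : Finset ι, uAND T = 0.5 * v T + γ T)
    (huOR : ∀ T : Finset ι, uOR T = 0.5 * v T - γ T)
    (hIAND : ∀ S : Finset ι,
      IAND S = ∑ T ∈ S.powerset, (-1 : ℝ) ^ (S.card - T.card) * uAND T)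
    (hIOR : ∀ S : Finset ι,
      IOR S = -∑ T ∈ S.powerset, (-1 : ℝ) ^ (S.card - T.card) * uOR (Finset.univ \ T))
    (T : Finset ι) :
    v T = v ∅
      + (∑ S ∈ T.powerset.filter (fun S => S ≠ ∅), IAND S)
      + (∑ S ∈ (Finset.univ : Finset (Finset ι)).filter (fun S => (S ∩ T).Nonempty),
          IOR S) := by
  -- AND part
  have hAND : (∑ S ∈ T.powerset.filter (fun S => S ≠ ∅), IAND S) = uAND T - uAND ∅ := by
    have h1 : (∑ S ∈ T.powerset, IAND S) = uAND T := by
      simp_rw [hIAND]; exact mobius_sum uAND T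
    have h2 : (∑ S ∈ T.powerset, IAND S)
        = IAND ∅ + ∑ S ∈ T.powerset.filter (fun S => S ≠ ∅), IAND S := by
      rw [← Finset.sum_filter_add_sum_filter_not T.powerset (fun S => S = ∅)]
      congr 1
      · rw [Finset.filter_eq']
        simp [Finset.empty_mem_powerset]
    have h3 : IAND ∅ = uAND ∅ := by
      rw [hIAND]; simp
    rw [h2, h3] at h1; linarith
  -- OR part
  have hOR : (∑ S ∈ (Finset.univ : Finset (Finset ι)).filter (fun S => (S ∩ T).Nonempty),
      IOR S) = uOR T - uOR ∅ := by
    set w : Finset ι → ℝ := fun S => uOR (Finset.univ \ S) with hw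
    have hsum : ∀ A : Finset ι, (∑ S ∈ A.powerset, IOR S) = -w A := by
      intro A
      calc (∑ S ∈ A.powerset, IOR S)
          = ∑ S ∈ A.powerset, -∑ U ∈ S.powerset, (-1:ℝ)^(S.card - U.card) * w U := by
            refine Finset.sum_congr rfl fun S _ => ?_; rw [hIOR]
        _ = -∑ S ∈ A.powerset, ∑ U ∈ S.powerset, (-1:ℝ)^(S.card - U.card) * w U := by
            rw [Finset.sum_neg_distrib]
        _ = -w A := by rw [mobius_sum]
    have hsplit := Finset.sum_filter_add_sum_filter_not (Finset.univ : Finset (Finset ι))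
      (fun S => (S ∩ T).Nonempty) IOR
    have hcompl : (Finset.univ : Finset (Finset ι)).filter (fun S => ¬(S ∩ T).Nonempty)
        = (Finset.univ \ T).powerset := by
      ext S
      simp [Finset.not_nonempty_iff_eq_empty, ← Finset.disjoint_iff_inter_eq_empty,
        Finset.subset_sdiff]
    have htot : (∑ S ∈ (Finset.univ : Finset (Finset ι)), IOR S) = -w Finset.univ := by
      rw [← Finset.powerset_univ]; exact hsum _
    rw [hcompl, hsum] at hsplit
    have hw1 : w Finset.univ = uOR ∅ := by simp [hw]
    have hw2 : w (Finset.univ \ T) = uOR T := by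
      simp [hw, Finset.sdiff_sdiff_self_left, Finset.univ_inter]
    rw [htot, hw1, hw2] at hsplit
    linarith
  rw [hAND, hOR, huAND, huOR, huAND, huOR]
  ring
end

section
/- Let N be a finite set and let u : 2^N → ℝ. Define the OR interaction I^OR_S(u) = −Σ_{T ⊆ S} (−1)^{|S|−|T|} u(N\T) for every S ⊆ N. Then for every S ⊆ N one has Σ_{T ⊆ N, T ∩ S ≠ ∅} I^OR_T(u) = u(S) − u(∅). -/
open Finset

/-- The OR interaction of `S` (with ambient set `N = Finset.univ`):
`IOR u S = -∑_{T ⊆ S} (-1)^{|S|-|T|} u (N \ T)`. -/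
noncomputable def IOR {ι : Type*} [Fintype ι] [DecidableEq ι]
    (u : Finset ι → ℝ) (S : Finset ι) : ℝ :=
  -∑ T ∈ S.powerset, (-1 : ℝ) ^ (S.card - T.card) * u (Finset.univ \ T)

lemma alt_sum_eq {ι : Type*} [DecidableEq ι] (A W : Finset ι) (hW : W ⊆ A) :
    (∑ T ∈ A.powerset.filter (fun T => W ⊆ T), (-1 : ℝ) ^ (T.card - W.card))
      = if W = A then 1 else 0 := by
  have h : (∑ T ∈ A.powerset.filter (fun T => W ⊆ T), (-1 : ℝ) ^ (T.card - W.card))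
      = ∑ D ∈ (A \ W).powerset, (-1 : ℝ) ^ D.card := by
    apply Finset.sum_nbij' (i := fun T => T \ W) (j := fun D => W ∪ D)
    · intro T hT
      simp only [mem_filter, mem_powerset] at hT ⊢
      exact sdiff_subset_sdiff hT.1 le_rfl
    · intro D hD
      simp only [mem_powerset] at hD
      simp only [mem_filter, mem_powerset]
      exact ⟨union_subset hW (hD.trans sdiff_subset), subset_union_left⟩
    · intro T hT
      simp only [mem_filter, mem_powerset] at hT
      rw [union_sdiff_of_subset hT.2]
    · intro D hD
      simp only [mem_powerset] at hD
      rw [union_sdiff_cancel_left]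
      exact disjoint_sdiff.mono_right hD
    · intro T hT
      simp only [mem_filter, mem_powerset] at hT
      rw [card_sdiff_of_subset hT.2]
  have hcast : (∑ D ∈ (A \ W).powerset, (-1 : ℝ) ^ D.card)
      = ((∑ D ∈ (A \ W).powerset, (-1 : ℤ) ^ D.card : ℤ) : ℝ) := by
    push_cast; rfl
  rw [h, hcast, Finset.sum_powerset_neg_one_pow_card]
  push_cast
  simp only [sdiff_eq_empty_iff_subset]
  by_cases hWA : W = A
  · simp [hWA]
  · rw [if_neg (fun hAW => hWA (subset_antisymm hW hAW)), if_neg hWA]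

lemma mobius_inv {ι : Type*} [DecidableEq ι] (v : Finset ι → ℝ) (A : Finset ι) :
    ∑ T ∈ A.powerset, ∑ W ∈ T.powerset, (-1 : ℝ) ^ (T.card - W.card) * v W = v A := by
  rw [Finset.sum_comm' (s' := fun W => A.powerset.filter (fun T => W ⊆ T))
    (t' := A.powerset) (fun T W => by
      simp only [mem_powerset, mem_filter]
      constructor
      · rintro ⟨hTA, hWT⟩; exact ⟨⟨hTA, hWT⟩, hWT.trans hTA⟩
      · rintro ⟨⟨hTA, hWT⟩, _⟩; exact ⟨hTA, hWT⟩)]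
  rw [Finset.sum_congr rfl (fun W hW => by
    rw [← Finset.sum_mul, alt_sum_eq A W (mem_powerset.mp hW)])]
  rw [Finset.sum_eq_single A]
  · simp
  · intro W _ hW; simp [hW]
  · intro h; exact absurd (mem_powerset.mpr le_rfl) h

lemma sum_powerset_IOR {ι : Type*} [Fintype ι] [DecidableEq ι]
    (u : Finset ι → ℝ) (A : Finset ι) :
    ∑ T ∈ A.powerset, IOR u T = -u (Finset.univ \ A) := by
  unfold IOR
  rw [Finset.sum_neg_distrib]
  rw [mobius_inv (fun W => u (Finset.univ \ W)) A]

/-- **Universal matching property of OR interactions.**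
For every `S ⊆ N`, `∑_{T ⊆ N, T ∩ S ≠ ∅} IOR u T = u S - u ∅`. -/
theorem universal_matching_OR {ι : Type*} [Fintype ι] [DecidableEq ι]
    (u : Finset ι → ℝ) (S : Finset ι) :
    ∑ T ∈ (Finset.univ : Finset (Finset ι)).filter (fun T => (T ∩ S).Nonempty), IOR u T
      = u S - u ∅ := by
  have hsplit := Finset.sum_filter_add_sum_filter_not (Finset.univ : Finset (Finset ι))
    (fun T => (T ∩ S).Nonempty) (IOR u)
  have h1 : (Finset.univ : Finset (Finset ι)).filter (fun T => ¬(T ∩ S).Nonempty)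
      = (Finset.univ \ S).powerset := by
    ext T
    simp only [mem_filter, mem_univ, true_and, mem_powerset, Finset.not_nonempty_iff_eq_empty,
      ← Finset.disjoint_iff_inter_eq_empty, Finset.subset_sdiff]
    exact ⟨fun h => ⟨subset_univ T, h⟩, fun h => h.2⟩
  have h2 : (Finset.univ : Finset (Finset ι)) = (Finset.univ : Finset ι).powerset := by
    simp [Finset.powerset_univ]
  have h3 : ∑ T ∈ (Finset.univ \ S).powerset, IOR u T = -u S := by
    rw [sum_powerset_IOR, Finset.sdiff_sdiff_self_left, Finset.univ_inter]
  rw [h1, h3, h2, sum_powerset_IOR, Finset.sdiff_self] at hsplit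
  rw [h2]
  linarith
end
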